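/- In the setting of the parametrization theorem (Q : I × ℝᵏ ⇉ ℝᵐ with nonempty closed convex values, measurable in t, locally Lipschitz in x; δ : I × ℝᵏ ⇉ ℝᵐ with nonempty closed values measurable in t; and φ(t,x,u) := S_m ∘ P(η(t,x)u, Q(t,x)) the constructed parametrization, where η(t,x) = ‖δ(t,x)‖ whenever 0 < ‖δ(t,x)‖ < +∞ and 1 otherwise), for every (t,x) ∈ I × ℝᵐ with δ(t,x) bounded and δ(t,x) ≠ {0}, and for every γ ∈ Q(t,x) ∩ δ(t,x) and every θ ∈ φ(t,x,B), one has |γ − θ| ≤ 10 m ‖δ(t,x)‖; in particular the Hausdorff distance between Q(t,x) ∩ δ(t,x) and φ(t,x,B) is at most 10 m ‖δ(t,x)‖. -/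

import Mathlib

open Set Metric Pointwise
open scoped ENNReal

noncomputable section

abbrev En (n : ℕ) := EuclideanSpace ℝ (Fin n)

/-- `‖E‖ = sup{ |k| : k ∈ E } ∈ [0,+∞]` for a subset `E` of a normed space. -/
noncomputable def setSupNorm {E : Type*} [NormedAddCommGroup E] (A : Set E) : ℝ≥0∞ :=
  ⨆ x ∈ A, (‖x‖₊ : ℝ≥0∞)

/-- A set-valued map `S` on `I ⊆ ℝ` (with closed values) is measurable if the preimage of
every open set is Lebesgue measurable. -/
def SVMeasOn {α : Type*} [TopologicalSpace α] (I : Set ℝ) (S : ℝ → Set α) : Prop :=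
  ∀ U : Set α, IsOpen U → MeasurableSet {t : ℝ | t ∈ I ∧ (S t ∩ U).Nonempty}

/-- The projection map `P(u,J) = J ∩ B(u, 2d(u,J))`. -/
noncomputable def projSet {E : Type*} [NormedAddCommGroup E] (u : E) (J : Set E) : Set E :=
  J ∩ closedBall u (2 * infDist u J)

open Classical in
/-- `η(t,x) = ‖δ(t,x)‖` whenever `0 < ‖δ(t,x)‖ < +∞`, and `η(t,x) = 1` otherwise. -/
noncomputable def etaOf {k m : ℕ} (δ : ℝ → En k → Set (En m)) (t : ℝ) (x : En k) : ℝ :=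
  if 0 < setSupNorm (δ t x) ∧ setSupNorm (δ t x) < ⊤ then (setSupNorm (δ t x)).toReal
  else 1

/-- Remark 3.1: in the setting of the parametrization theorem, with
`φ(t,x,u) = S_m(P(η(t,x)u, Q(t,x)))` the constructed parametrization (where `S_m` is the
`m`-Lipschitz Steiner selection), if `δ(t,x)` is bounded and `δ(t,x) ≠ {0}`, then every
`γ ∈ Q(t,x) ∩ δ(t,x)` and every `θ ∈ φ(t,x,B)` satisfy `|γ − θ| ≤ 10 m ‖δ(t,x)‖`; in
particular the Hausdorff distance between `Q(t,x) ∩ δ(t,x)` and `φ(t,x,B)` is at most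
`10 m ‖δ(t,x)‖`. -/
theorem stmt_2 {k m : ℕ} (I : Set ℝ) (hI : I ⊆ Ici 0) (hIcl : IsClosed I)
    (hIoc : I.OrdConnected)
    (Q : ℝ → En k → Set (En m))
    (hQne : ∀ t ∈ I, ∀ x, (Q t x).Nonempty)
    (hQcl : ∀ t ∈ I, ∀ x, IsClosed (Q t x))
    (hQcv : ∀ t ∈ I, ∀ x, Convex ℝ (Q t x))
    (hQmeas : ∀ x, SVMeasOn I fun t => Q t x)
    (c : ℝ → ℝ → ℝ)
    (hc : ∀ t ∈ I, ∀ r > (0 : ℝ), 0 < c r t ∧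
      ∀ x ∈ closedBall (0 : En k) r, ∀ y ∈ closedBall (0 : En k) r,
        Q t x ⊆ Q t y + closedBall 0 (c r t * ‖x - y‖))
    (δ : ℝ → En k → Set (En m))
    (hδne : ∀ t ∈ I, ∀ x, (δ t x).Nonempty)
    (hδcl : ∀ t ∈ I, ∀ x, IsClosed (δ t x))
    (hδmeas : ∀ x, SVMeasOn I fun t => δ t x)
    -- `Sm` is the Steiner selection: `m`-Lipschitz for the Hausdorff distance on nonempty
    -- compact convex sets, with `Sm J ∈ J`
    (Sm : Set (En m) → En m)
    (hSmem : ∀ J : Set (En m), J.Nonempty → IsClosed J → Convex ℝ J →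
      Bornology.IsBounded J → Sm J ∈ J)
    (hSlip : ∀ J K : Set (En m),
      J.Nonempty → IsClosed J → Convex ℝ J → Bornology.IsBounded J →
      K.Nonempty → IsClosed K → Convex ℝ K → Bornology.IsBounded K →
      dist (Sm J) (Sm K) ≤ (m : ℝ) * hausdorffDist J K) :
    ∀ t ∈ I, ∀ x : En k, Bornology.IsBounded (δ t x) → δ t x ≠ {0} →
      (∀ γ ∈ Q t x ∩ δ t x,
        ∀ θ ∈ (fun u => Sm (projSet (etaOf δ t x • u) (Q t x))) '' closedBall 0 1,
          dist γ θ ≤ 10 * (m : ℝ) * (setSupNorm (δ t x)).toReal) ∧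
      hausdorffDist (Q t x ∩ δ t x)
          ((fun u => Sm (projSet (etaOf δ t x • u) (Q t x))) '' closedBall 0 1) ≤
        10 * (m : ℝ) * (setSupNorm (δ t x)).toReal := by
  intro t ht x hbdd hne0
  have hQn := hQne t ht x
  have hQc := hQcl t ht x
  have hQv := hQcv t ht x
  set N := setSupNorm (δ t x) with hN
  have hNtop : N < ⊤ := by
    obtain ⟨R, hR⟩ := hbdd.subset_closedBall 0
    refine lt_of_le_of_lt (iSup₂_le fun y hy => ?_) (ENNReal.ofReal_lt_top (r := R))
    have : ‖y‖ ≤ R := by simpa [dist_zero_right] using hR hy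
    rw [← enorm_eq_nnnorm, ← ofReal_norm]
    exact ENNReal.ofReal_le_ofReal this
  have hNpos : 0 < N := by
    obtain ⟨a, ha, ha0⟩ : ∃ a ∈ δ t x, a ≠ 0 := by
      by_contra h
      push_neg at h
      exact hne0 ((Set.eq_singleton_iff_nonempty_unique_mem).mpr ⟨hδne t ht x, h⟩)
    calc (0 : ℝ≥0∞) < (‖a‖₊ : ℝ≥0∞) := by simpa using ha0
      _ ≤ N := le_iSup₂ (f := fun y (_ : y ∈ δ t x) => (‖y‖₊ : ℝ≥0∞)) a ha
  set r := N.toReal with hr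
  have hrpos : 0 < r := ENNReal.toReal_pos hNpos.ne' hNtop.ne
  have hη : etaOf δ t x = r := by
    rw [etaOf, if_pos ⟨hNpos, hNtop⟩]
  have hnb : ∀ y ∈ δ t x, ‖y‖ ≤ r := by
    intro y hy
    have h1 : (‖y‖₊ : ℝ≥0∞) ≤ N := le_iSup₂ (f := fun z (_ : z ∈ δ t x) => (‖z‖₊ : ℝ≥0∞)) y hy
    have := ENNReal.toReal_mono hNtop.ne h1
    simpa using this
  have key : ∀ γ ∈ Q t x ∩ δ t x,
      ∀ θ ∈ (fun u => Sm (projSet (etaOf δ t x • u) (Q t x))) '' closedBall 0 1,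
        dist γ θ ≤ 10 * (m : ℝ) * r := by
    rintro γ ⟨hγQ, hγδ⟩ θ ⟨u, hu, rfl⟩
    set v := etaOf δ t x • u with hv
    have hvn : ‖v‖ ≤ r := by
      have hu1 : ‖u‖ ≤ 1 := by simpa using mem_closedBall_zero_iff.mp hu
      have : ‖v‖ = |etaOf δ t x| * ‖u‖ := by rw [hv, norm_smul, Real.norm_eq_abs]
      rw [this, hη, abs_of_pos hrpos]
      nlinarith
    set J := projSet v (Q t x) with hJ
    have hinf : infDist v (Q t x) ≤ dist v γ := infDist_le_dist_of_mem hγQ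
    have hinf0 : 0 ≤ infDist v (Q t x) := infDist_nonneg
    obtain ⟨y, hyQ, hy⟩ := IsClosed.exists_infDist_eq_dist hQc ⟨γ, hγQ⟩ v
    have hJne : J.Nonempty := ⟨y, hyQ, by
      rw [mem_closedBall, dist_comm, ← hy]; linarith⟩
    have hJcl : IsClosed J := hQc.inter isClosed_closedBall
    have hJcv : Convex ℝ J := hQv.inter (convex_closedBall _ _)
    have hJbd : Bornology.IsBounded J :=
      (isBounded_closedBall (x := v) (r := 2 * infDist v (Q t x))).subset
        Set.inter_subset_right
    have hθJ : Sm J ∈ J := hSmem J hJne hJcl hJcv hJbd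
    have h1 : dist (Sm J) v ≤ 2 * infDist v (Q t x) := hθJ.2
    have hγnorm : ‖γ‖ ≤ r := hnb γ hγδ
    have hdvγ : dist v γ ≤ 2 * r := by
      calc dist v γ = ‖v - γ‖ := dist_eq_norm v γ
        _ ≤ ‖v‖ + ‖γ‖ := norm_sub_le v γ
        _ ≤ 2 * r := by linarith
    have h6 : dist γ (Sm J) ≤ 6 * r := by
      have htri : dist γ (Sm J) ≤ dist γ v + dist (Sm J) v := by
        rw [dist_comm (Sm J) v]; exact dist_triangle γ v (Sm J)
      have : dist γ v = dist v γ := dist_comm γ v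
      linarith
    rcases Nat.eq_zero_or_pos m with hm | hm
    · subst hm
      have : γ = Sm J := Subsingleton.elim γ (Sm J)
      simp [this]; rfl
    · have hm1 : (1 : ℝ) ≤ (m : ℝ) := by exact_mod_cast hm
      nlinarith
  refine ⟨key, ?_⟩
  rcases (Q t x ∩ δ t x).eq_empty_or_nonempty with hs | hs
  · rw [hs, hausdorffDist_empty']
    positivity
  · have hTne : ((fun u => Sm (projSet (etaOf δ t x • u) (Q t x))) '' closedBall 0 1).Nonempty :=
      ⟨_, ⟨0, mem_closedBall_self zero_le_one, rfl⟩⟩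
    apply hausdorffDist_le_of_mem_dist (by positivity)
    · intro a ha
      obtain ⟨b, hb⟩ := hTne
      exact ⟨b, hb, key a ha b hb⟩
    · intro b hb
      obtain ⟨a, ha⟩ := hs
      exact ⟨a, ha, by rw [dist_comm]; exact key a ha b hb⟩
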